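/- Let v^k, θ^k, y^k ∈ ℝ^d be sequences satisfying v^1 = θ^1 = y^1, the recursions v^(k+1) = ρ v^k + √(μγ) y^k - √(γ/μ) g^k, θ^(k+1) = y^k - γ g^k, and ρ(θ^(k+1) - θ^k) = (1 + √(μγ))(y^(k+1) - θ^(k+1)), where ρ = 1 - √(μγ), μ, γ > 0 with μγ < 1, and {g^k} is an arbitrary sequence in ℝ^d. Then v^k - y^k = (√(μγ))^{-1}(y^k - θ^k) for all k ≥ 1. -/

import Mathlib

/-- The estimate-sequence minimizer identity for the Nesterov extrapolation step. -/
theorem stmt_9 {d : ℕ} (hd : 1 ≤ d) (μ γ : ℝ)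
    (hμ : 0 < μ) (hγ : 0 < γ) (hμγ : μ * γ < 1)
    (v θ y g : ℕ → EuclideanSpace ℝ (Fin d))
    (hinit : v 1 = θ 1 ∧ θ 1 = y 1)
    (hv : ∀ k, 1 ≤ k →
      v (k + 1) = (1 - Real.sqrt (μ * γ)) • v k + Real.sqrt (μ * γ) • y k
        - Real.sqrt (γ / μ) • g k)
    (hθ : ∀ k, 1 ≤ k → θ (k + 1) = y k - γ • g k)
    (hy : ∀ k, 1 ≤ k →
      (1 - Real.sqrt (μ * γ)) • (θ (k + 1) - θ k)
        = (1 + Real.sqrt (μ * γ)) • (y (k + 1) - θ (k + 1))) :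
    ∀ k, 1 ≤ k → v k - y k = (Real.sqrt (μ * γ))⁻¹ • (y k - θ k) := by
  have hμγ0 : 0 < μ * γ := mul_pos hμ hγ
  set s := Real.sqrt (μ * γ) with hsdef
  have hs : 0 < s := Real.sqrt_pos.mpr hμγ0
  have h1s : (0:ℝ) < 1 + s := by linarith
  have hg : Real.sqrt (γ / μ) = γ / s := by
    rw [hsdef, eq_div_iff (Real.sqrt_pos.mpr hμγ0).ne', ← Real.sqrt_mul (by positivity),
      show γ / μ * (μ * γ) = γ ^ 2 by field_simp, Real.sqrt_sq hγ.le]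
  intro k hk
  induction k, hk using Nat.le_induction with
  | base => simp [hinit.1, hinit.2]
  | succ k hk IH =>
    have hIH : v k = y k + s⁻¹ • (y k - θ k) := by
      rw [← IH]; abel
    have hynext : y (k + 1) = θ (k + 1) + ((1 + s)⁻¹ * (1 - s)) • (θ (k + 1) - θ k) := by
      have h : y (k + 1) - θ (k + 1) = ((1 + s)⁻¹ * (1 - s)) • (θ (k + 1) - θ k) := by
        rw [mul_smul, hy k hk, smul_smul, inv_mul_cancel₀ h1s.ne', one_smul]
      rw [← h]; abel
    rw [hv k hk, hg, hynext, hθ k hk, hIH]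
    match_scalars <;> field_simp <;> ring_nf <;>
      rw [show s * s = μ * γ from Real.mul_self_sqrt hμγ0.le] <;> ring
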